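/- Let K be an algebraically closed field of characteristic zero, let n ≥ 2, let c ∈ K(x) be a rational function not lying in K, and let G ∈ K[s, t] be a homogeneous polynomial of degree n − 1 with constant (i.e. in K) coefficients, with G monic in s. Define F(s, t) = G(s, t)·(s + c·t) ∈ K(x)[s, t]. Then there are at most 4 + (n − 1) values λ ∈ K such that F(λ, 1) ∈ K(x) is nonzero and has only multiple zeros, i.e. every zero of F(λ, 1) on the projective line (including a possible zero at infinity) has multiplicity at least 2. -/

import Mathlib

open Polynomial

/-- A rational function `f` has only multiple zeros if every root of its numerator
has multiplicity at least `2`, and moreover if `f` has a zero at infinity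
(i.e. `deg num < deg denom`) then that zero has multiplicity at least `2`. -/
def HasOnlyMultipleZeros {K : Type*} [Field K] (f : RatFunc K) : Prop :=
  (∀ a : K, f.num.eval a = 0 → 2 ≤ f.num.rootMultiplicity a) ∧
  (f.num.natDegree < f.denom.natDegree → f.num.natDegree + 2 ≤ f.denom.natDegree)

/-- The homogeneous form `G(s,t) = ∑_{i<n} g_i s^i t^{n-1-i}` of degree `n-1` with
constant coefficients `g_i ∈ K`, monic in `s` (i.e. `g_{n-1} = 1`), times the linear
form `s + c·t`, specialized at `(lam, 1)`, can be nonzero with only multiple zeros for at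
most `4 + (n-1)` values `lam ∈ K`. -/
theorem constant_form_times_linear_is_rarely_powerful
    {K : Type*} [Field K] [IsAlgClosed K] [CharZero K]
    (n : ℕ) (hn : 2 ≤ n)
    (c : RatFunc K) (hc : ∀ k : K, c ≠ RatFunc.C k)
    (g : Fin n → K) (hmonic : g ⟨n - 1, by omega⟩ = 1)
    (B : Finset K)
    (hB : ∀ lam ∈ B,
      RatFunc.C (∑ i : Fin n, g i * lam ^ (i : ℕ)) * (RatFunc.C lam + c) ≠ 0 ∧
      HasOnlyMultipleZeros (RatFunc.C (∑ i : Fin n, g i * lam ^ (i : ℕ)) * (RatFunc.C lam + c))) :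
    B.card ≤ 4 + (n - 1) := by
  classical
  set p := c.num with hpdef
  set q := c.denom with hqdef
  have hqm : q.Monic := c.monic_denom
  have hq0 : q ≠ 0 := hqm.ne_zero
  have hcop : IsCoprime p q := c.isCoprime_num_denom
  have hc0 : c ≠ 0 := by
    have := hc 0
    simpa using this
  have hp0 : p ≠ 0 := RatFunc.num_ne_zero hc0
  set M := max p.natDegree q.natDegree with hMdef
  have hM : 1 ≤ M := by
    by_contra h
    push_neg at h
    have h1 := le_max_left p.natDegree q.natDegree
    have h2 := le_max_right p.natDegree q.natDegree
    have hdp : p.natDegree = 0 := by omega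
    have hdq : q.natDegree = 0 := by omega
    have hq1 : q = 1 := hqm.natDegree_eq_zero.mp hdq
    have hpa : p = Polynomial.C (p.coeff 0) := Polynomial.eq_C_of_natDegree_eq_zero hdp
    apply hc (p.coeff 0)
    rw [← c.num_div_denom, ← hpdef, ← hqdef, hq1, map_one, div_one, hpa,
      RatFunc.algebraMap_C]
    simp
  set D := derivative p * q - p * derivative q with hDdef
  have hD0 : D ≠ 0 := by
    intro h
    rw [hDdef, sub_eq_zero] at h
    have hqdvd : q ∣ derivative q * p := ⟨derivative p, by rw [mul_comm] at h ⊢; linear_combination -h⟩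
    have hq' : q ∣ derivative q := hcop.symm.dvd_of_dvd_mul_right hqdvd
    have hq'0 : derivative q = 0 := by
      by_contra h'
      have h1 := Polynomial.natDegree_le_of_dvd hq' h'
      have h2 := Polynomial.natDegree_derivative_le q
      have h3 : q.natDegree ≠ 0 := fun h0 => h' (by
        rw [Polynomial.eq_C_of_natDegree_eq_zero h0]; simp)
      omega
    have hdq : q.natDegree = 0 := Polynomial.natDegree_eq_zero_of_derivative_eq_zero hq'0
    have hq1 : q = 1 := hqm.natDegree_eq_zero.mp hdq
    have hp' : derivative p = 0 := by
      rw [hq1] at h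
      simpa using h
    have hdp : p.natDegree = 0 := Polynomial.natDegree_eq_zero_of_derivative_eq_zero hp'
    have : M = 0 := by rw [hMdef, hdp, hdq]; simp
    omega
  have hDdeg : D.natDegree ≤ 2 * M - 1 := by
    have h3 := le_max_left p.natDegree q.natDegree
    have h4 := le_max_right p.natDegree q.natDegree
    have h1 : (derivative p * q).natDegree ≤ 2 * M - 1 := by
      have h5 := Polynomial.natDegree_mul_le (p := derivative p) (q := q)
      have h2 := Polynomial.natDegree_derivative_le p
      omega
    have h1' : (p * derivative q).natDegree ≤ 2 * M - 1 := by
      have h5 := Polynomial.natDegree_mul_le (p := p) (q := derivative q)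
      have h2 := Polynomial.natDegree_derivative_le q
      omega
    have := Polynomial.natDegree_sub_le (derivative p * q) (p * derivative q)
    rw [← hDdef] at this
    omega
  -- key pointwise facts
  have key : ∀ lam ∈ B, (Polynomial.C lam * q + p) ≠ 0 ∧
      ∀ a : K, (Polynomial.C lam * q + p).eval a = 0 →
        2 ≤ (Polynomial.C lam * q + p).rootMultiplicity a := by
    intro lam hlam
    obtain ⟨hne, hmul⟩ := hB lam hlam
    set k := ∑ i : Fin n, g i * lam ^ (i : ℕ) with hk
    set f := RatFunc.C k * (RatFunc.C lam + c) with hf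
    have hk0 : k ≠ 0 := by
      intro h
      apply hne
      rw [hf, h, map_zero, zero_mul]
    set N := Polynomial.C lam * q + p with hN
    have hNq : IsCoprime N q := by
      have h := hcop.add_mul_right_left (Polynomial.C lam)
      rwa [add_comm] at h
    have hfrep : f = algebraMap K[X] (RatFunc K) (Polynomial.C k * N) / algebraMap K[X] (RatFunc K) q := by
      have hqne : algebraMap K[X] (RatFunc K) q ≠ 0 := RatFunc.algebraMap_ne_zero hq0
      rw [eq_div_iff hqne, hf, hN]
      rw [← RatFunc.algebraMap_C k, ← RatFunc.algebraMap_C lam, ← c.num_div_denom,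
        ← hpdef, ← hqdef]
      field_simp
      simp only [map_mul, map_add]
    have heq : f.num * q = Polynomial.C k * N * f.denom :=
      (RatFunc.num_mul_eq_mul_denom_iff hq0).mpr hfrep
    have hnum0 : f.num ≠ 0 := RatFunc.num_ne_zero hne
    have hNdvd : N ∣ f.num := by
      refine hNq.dvd_of_dvd_mul_right ⟨Polynomial.C k * f.denom, ?_⟩
      rw [heq]; ring
    have hdvdN : f.num ∣ N := by
      have h1 : f.num ∣ Polynomial.C k * N :=
        (RatFunc.isCoprime_num_denom f).dvd_of_dvd_mul_right ⟨q, heq.symm⟩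
      refine h1.trans ⟨Polynomial.C k⁻¹, ?_⟩
      rw [mul_comm, ← mul_assoc, ← Polynomial.C_mul, inv_mul_cancel₀ hk0, Polynomial.C_1,
        one_mul]
    have hN0 : N ≠ 0 := fun h => hnum0 (zero_dvd_iff.mp (h ▸ hNdvd))
    refine ⟨hN0, fun a ha => ?_⟩
    have hfa : f.num.eval a = 0 := by
      obtain ⟨u, hu⟩ := hNdvd
      rw [hu, Polynomial.eval_mul, ha, zero_mul]
    have h2 := hmul.1 a hfa
    rw [Polynomial.le_rootMultiplicity_iff hN0]
    exact ((Polynomial.le_rootMultiplicity_iff hnum0).mp h2).trans hdvdN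
  -- exceptional set where the numerator degree drops
  set Bex := B.filter (fun lam => lam * q.coeff M + p.coeff M = 0) with hBexdef
  have hlead : q.coeff M ≠ 0 ∨ p.coeff M ≠ 0 := by
    rcases max_cases p.natDegree q.natDegree with ⟨h1, h2⟩ | ⟨h1, h2⟩
    · right
      rw [hMdef, h1]
      exact Polynomial.leadingCoeff_ne_zero.mpr hp0
    · left
      rw [hMdef, h1]
      exact Polynomial.leadingCoeff_ne_zero.mpr hq0
  have hBexcard : Bex.card ≤ 1 := by
    rw [Finset.card_le_one]
    intro a ha b hb
    rw [hBexdef, Finset.mem_filter] at ha hb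
    by_cases hq' : q.coeff M = 0
    · exfalso
      have hp' : p.coeff M ≠ 0 := hlead.resolve_left (fun h => h hq')
      apply hp'
      have := ha.2
      rw [hq'] at this
      simpa using this
    · have h0 : (a - b) * q.coeff M = 0 := by linear_combination ha.2 - hb.2
      exact sub_eq_zero.mp ((mul_eq_zero.mp h0).resolve_right hq')
  set B' := B \ Bex with hB'def
  have hNdeg : ∀ lam ∈ B', (Polynomial.C lam * q + p).natDegree = M := by
    intro lam hlam
    have hlamB : lam ∈ B := (Finset.mem_sdiff.mp hlam).1
    have hnot : lam * q.coeff M + p.coeff M ≠ 0 := by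
      have h := (Finset.mem_sdiff.mp hlam).2
      rw [hBexdef, Finset.mem_filter] at h
      tauto
    have hcoeff : (Polynomial.C lam * q + p).coeff M = lam * q.coeff M + p.coeff M := by
      simp [Polynomial.coeff_add, Polynomial.coeff_C_mul]
    have hle : (Polynomial.C lam * q + p).natDegree ≤ M := by
      refine (Polynomial.natDegree_add_le _ _).trans (max_le ?_ ?_)
      · exact (Polynomial.natDegree_C_mul_le lam q).trans (le_max_right _ _)
      · exact le_max_left _ _
    have hge : M ≤ (Polynomial.C lam * q + p).natDegree :=
      Polynomial.le_natDegree_of_ne_zero (by rw [hcoeff]; exact hnot)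
    omega
  -- the wronskian-divisor polynomials
  set W : K → K[X] := fun lam => ∏ a ∈ (Polynomial.C lam * q + p).roots.toFinset,
      (X - Polynomial.C a) ^ ((Polynomial.C lam * q + p).rootMultiplicity a - 1) with hWdef
  have hW0 : ∀ lam, W lam ≠ 0 := fun lam =>
    Finset.prod_ne_zero_iff.mpr fun a _ => pow_ne_zero _ (Polynomial.X_sub_C_ne_zero a)
  have hWdvd : ∀ lam ∈ B, W lam ∣ D := by
    intro lam hlam
    set N := Polynomial.C lam * q + p with hN
    have hDN : D = derivative N * q - N * derivative q := by
      rw [hDdef, hN]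
      simp only [derivative_add, derivative_mul, derivative_C, zero_mul, zero_add]
      ring
    rw [hDN]
    refine Finset.prod_dvd_of_coprime ?_ ?_
    · intro a _ b _ hab
      exact (Polynomial.isCoprime_X_sub_C_of_isUnit_sub
        (isUnit_iff_ne_zero.mpr (sub_ne_zero_of_ne hab))).pow
    · intro a _
      have hdvd1 : (X - Polynomial.C a) ^ (N.rootMultiplicity a - 1) ∣ N :=
        (pow_dvd_pow _ (Nat.sub_le _ _)).trans (Polynomial.pow_rootMultiplicity_dvd N a)
      have hdvd2 : (X - Polynomial.C a) ^ (N.rootMultiplicity a - 1) ∣ derivative N :=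
        (pow_dvd_pow _
          (Polynomial.rootMultiplicity_sub_one_le_derivative_rootMultiplicity N a)).trans
          (Polynomial.pow_rootMultiplicity_dvd _ a)
      exact dvd_sub (hdvd2.mul_right q) (hdvd1.mul_right (derivative q))
  have hWdeg : ∀ lam ∈ B', M - M / 2 ≤ (W lam).natDegree := by
    intro lam hlam
    have hlamB : lam ∈ B := (Finset.mem_sdiff.mp hlam).1
    set N := Polynomial.C lam * q + p with hN
    have hN0 : N ≠ 0 := (key lam hlamB).1
    have hmult := (key lam hlamB).2
    have hcard : Multiset.card N.roots = M := by
      have hsp : Polynomial.Splits N := IsAlgClosed.splits N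
      rw [Polynomial.splits_iff_card_roots.mp hsp]
      exact hNdeg lam hlam
    have hone : ∀ a ∈ N.roots.toFinset, 2 ≤ N.rootMultiplicity a := by
      intro a ha
      exact hmult a ((Polynomial.mem_roots'.mp (Multiset.mem_toFinset.mp ha)).2)
    set t := N.roots.toFinset.card with ht
    have hsum' : ∑ a ∈ N.roots.toFinset, N.rootMultiplicity a = M := by
      rw [← hcard, ← Multiset.toFinset_sum_count_eq]
      exact Finset.sum_congr rfl fun a _ => (Polynomial.count_roots N).symm
    have h2t : 2 * t ≤ M := by
      have : ∑ a ∈ N.roots.toFinset, 2 ≤ ∑ a ∈ N.roots.toFinset, N.rootMultiplicity a :=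
        Finset.sum_le_sum hone
      rw [Finset.sum_const, smul_eq_mul] at this
      omega
    have hdegW : (W lam).natDegree + t = M := by
      have hW : (W lam).natDegree = ∑ a ∈ N.roots.toFinset, (N.rootMultiplicity a - 1) := by
        rw [hWdef]
        rw [Polynomial.natDegree_prod _ _
          (fun a _ => pow_ne_zero _ (Polynomial.X_sub_C_ne_zero a))]
        exact Finset.sum_congr rfl fun a _ => by
          rw [Polynomial.natDegree_pow, Polynomial.natDegree_X_sub_C, mul_one]
      have hsplit : ∑ a ∈ N.roots.toFinset, (N.rootMultiplicity a - 1) + t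
          = ∑ a ∈ N.roots.toFinset, N.rootMultiplicity a := by
        rw [ht, Finset.card_eq_sum_ones, ← Finset.sum_add_distrib]
        exact Finset.sum_congr rfl fun a ha => by
          have := hone a ha
          omega
      rw [hW]
      omega
    omega
  -- pairwise coprimality
  have hWcop : (↑B' : Set K).Pairwise (Function.onFun IsCoprime W) := by
    intro lam hlam mu hmu hne
    simp only [Function.onFun, hWdef]
    refine IsCoprime.prod_left fun a ha => IsCoprime.prod_right fun b hb => ?_
    have hab : a ≠ b := by
      rintro rfl
      have h1 : (Polynomial.C lam * q + p).eval a = 0 :=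
        (Polynomial.mem_roots'.mp (Multiset.mem_toFinset.mp ha)).2
      have h2 : (Polynomial.C mu * q + p).eval a = 0 :=
        (Polynomial.mem_roots'.mp (Multiset.mem_toFinset.mp hb)).2
      simp only [Polynomial.eval_add, Polynomial.eval_mul, Polynomial.eval_C] at h1 h2
      have hqa : q.eval a = 0 := by
        have h0 : (lam - mu) * q.eval a = 0 := by linear_combination h1 - h2
        exact (mul_eq_zero.mp h0).resolve_left (sub_ne_zero_of_ne hne)
      have hpa : p.eval a = 0 := by linear_combination h1 - lam * hqa
      obtain ⟨u, v, huv⟩ := hcop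
      have hv := congrArg (Polynomial.eval a) huv
      simp [hqa, hpa] at hv
    exact (Polynomial.isCoprime_X_sub_C_of_isUnit_sub
      (isUnit_iff_ne_zero.mpr (sub_ne_zero_of_ne hab))).pow
  have hprodvd : (∏ lam ∈ B', W lam) ∣ D :=
    Finset.prod_dvd_of_coprime hWcop fun lam hlam =>
      hWdvd lam ((Finset.mem_sdiff.mp hlam).1)
  have hsumdeg : ∑ lam ∈ B', (W lam).natDegree ≤ D.natDegree := by
    rw [← Polynomial.natDegree_prod _ _ (fun lam _ => hW0 lam)]
    exact Polynomial.natDegree_le_of_dvd hprodvd hD0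
  have hcardB' : B'.card ≤ 4 := by
    by_contra h
    push_neg at h
    have h5 : 5 * (M - M / 2) ≤ ∑ lam ∈ B', (W lam).natDegree := by
      calc 5 * (M - M / 2) ≤ B'.card * (M - M / 2) :=
            Nat.mul_le_mul_right _ (by omega)
        _ ≤ ∑ lam ∈ B', (W lam).natDegree := by
            have := Finset.card_nsmul_le_sum B' (fun lam => (W lam).natDegree) (M - M / 2) hWdeg
            simpa [smul_eq_mul] using this
    omega
  have hfin : B.card ≤ B'.card + Bex.card := by
    have hsub : B ⊆ B' ∪ Bex := by
      intro x hx
      rw [Finset.mem_union, hB'def, Finset.mem_sdiff]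
      tauto
    calc B.card ≤ (B' ∪ Bex).card := Finset.card_le_card hsub
      _ ≤ B'.card + Bex.card := Finset.card_union_le _ _
  omega
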